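/- Let d ≥ 2 and let J = (1/(d(d−1))) Σ_{i≠j} E_{ii} ⊗ E_{jj}, a positive semidefinite matrix on ℂ^d ⊗ ℂ^d. Then for every Hermitian d×d matrix X such that I_d ⊗ X ≼ J in the Loewner order, one has tr(X) ≤ 0. Consequently sup { tr(X) : X Hermitian, I_d ⊗ X ≼ J } = 0. -/

import Mathlib

open Matrix Kronecker BigOperators
open scoped ComplexOrder

noncomputable section

/-- The trace norm (sum of singular values) of a complex matrix: `tr √(AᴴA)`. -/
def traceNorm {m n : Type*} [Fintype m] [Fintype n] [DecidableEq n] (A : Matrix m n ℂ) : ℝ :=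
  ((Matrix.posSemidef_conjTranspose_mul_self A).1.eigenvectorUnitary.1 *
    Matrix.diagonal (((↑) : ℝ → ℂ) ∘ Real.sqrt ∘ (Matrix.posSemidef_conjTranspose_mul_self A).1.eigenvalues) *
    (star (Matrix.posSemidef_conjTranspose_mul_self A).1.eigenvectorUnitary : Matrix n n ℂ)).trace.re

/-- A density matrix: positive semidefinite with trace one. -/
def IsDensity {n : Type*} [Fintype n] [DecidableEq n] (ρ : Matrix n n ℂ) : Prop :=
  ρ.PosSemidef ∧ ρ.trace = 1

/-- Trace norm contraction coefficient of a map on matrices. -/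
def etaTr {dA dB : ℕ} (Φ : Matrix (Fin dA) (Fin dA) ℂ → Matrix (Fin dB) (Fin dB) ℂ) : ℝ :=
  sSup {r : ℝ | ∃ ρ σ : Matrix (Fin dA) (Fin dA) ℂ, IsDensity ρ ∧ IsDensity σ ∧ ρ ≠ σ ∧
    r = traceNorm (Φ ρ - Φ σ) / traceNorm (ρ - σ)}

/-- Optimal success probability for transmitting one of `k` messages through `Φ`. -/
def Psucc {dA dB : ℕ} (Φ : Matrix (Fin dA) (Fin dA) ℂ → Matrix (Fin dB) (Fin dB) ℂ)
    (k : ℕ) : ℝ :=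
  sSup {r : ℝ | ∃ (M : Fin k → Matrix (Fin dB) (Fin dB) ℂ)
      (ρ : Fin k → Matrix (Fin dA) (Fin dA) ℂ),
    (∀ i, (M i).PosSemidef) ∧ (∑ i, M i = 1) ∧ (∀ i, IsDensity (ρ i)) ∧
    r = (1 / (k : ℝ)) * ∑ i, ((M i * Φ (ρ i)).trace).re}

/-- The Euclidean (ℓ₂) norm of a complex vector. -/
def l2norm {n : Type*} [Fintype n] (v : n → ℂ) : ℝ :=
  Real.sqrt (∑ i, ‖v i‖ ^ 2)

/-- Choi state of a map on matrices: `(1/dA) ∑ᵢⱼ Eᵢⱼ ⊗ Φ(Eᵢⱼ)`. -/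
def choi {dA dB : ℕ} (Φ : Matrix (Fin dA) (Fin dA) ℂ → Matrix (Fin dB) (Fin dB) ℂ) :
    Matrix (Fin dA × Fin dB) (Fin dA × Fin dB) ℂ :=
  (dA : ℂ)⁻¹ • ∑ i : Fin dA, ∑ j : Fin dA,
    (Matrix.single i j (1 : ℂ)) ⊗ₖ (Φ (Matrix.single i j (1 : ℂ)))

/-- The matrix `J = (1/(d(d−1))) ∑_{i≠j} E_{ii} ⊗ E_{jj}` on `ℂ^d ⊗ ℂ^d`. -/
def Jmat (d : ℕ) : Matrix (Fin d × Fin d) (Fin d × Fin d) ℂ :=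
  ((d : ℂ) * ((d : ℂ) - 1))⁻¹ •
    ∑ p ∈ Finset.univ.filter (fun p : Fin d × Fin d => p.1 ≠ p.2),
      Matrix.single p.1 p.1 (1 : ℂ) ⊗ₖ Matrix.single p.2 p.2 (1 : ℂ)

lemma Jmat_eq (d : ℕ) : Jmat d = Matrix.diagonal (fun p : Fin d × Fin d =>
    if p.1 = p.2 then 0 else ((d : ℂ) * ((d : ℂ) - 1))⁻¹) := by
  ext ⟨p1, p2⟩ ⟨q1, q2⟩
  simp only [Jmat, Matrix.smul_apply, Matrix.sum_apply, kroneckerMap_apply,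
    Matrix.single, Matrix.of_apply, Matrix.diagonal_apply]
  by_cases h12 : p1 = p2
  · rw [Finset.sum_eq_zero, smul_zero]
    · by_cases hq : (p1,p2) = (q1,q2) <;> simp_all [Prod.ext_iff]
    · rintro ⟨a, b⟩ hmem
      simp only [Finset.mem_filter, Finset.mem_univ, true_and] at hmem
      have : ¬(a = p1 ∧ b = p2) := by rintro ⟨rfl, rfl⟩; exact hmem h12
      by_cases ha : a = p1 <;> by_cases hb : b = p2 <;> simp [ha, hb] at this ⊢
  · rw [Finset.sum_eq_single (p1, p2)]
    · by_cases h1 : p1 = q1 <;> by_cases h2 : p2 = q2 <;>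
        simp_all [Prod.ext_iff, mul_comm]
    · rintro ⟨a, b⟩ hmem hne
      have : ¬(a = p1 ∧ b = p2) := by rintro ⟨rfl, rfl⟩; exact hne rfl
      by_cases ha : a = p1 <;> by_cases hb : b = p2 <;> simp [ha, hb] at this ⊢
    · intro h
      simp [Finset.mem_filter, h12] at h

lemma Jmat_posSemidef {d : ℕ} (hd : 2 ≤ d) : (Jmat d).PosSemidef := by
  rw [Jmat_eq]
  refine Matrix.posSemidef_diagonal_iff.mpr fun p => ?_
  by_cases h : p.1 = p.2
  · simp [h]
  · simp only [h, if_false]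
    have hd0 : (0:ℝ) < (d:ℝ) * ((d:ℝ) - 1) := by
      have : (2:ℝ) ≤ d := by exact_mod_cast hd
      nlinarith
    have : ((d : ℂ) * ((d : ℂ) - 1))⁻¹ = (((d:ℝ) * ((d:ℝ) - 1))⁻¹ : ℝ) := by
      push_cast; ring
    rw [this]
    exact_mod_cast (inv_pos.mpr hd0).le

lemma diag_le {d : ℕ} (X : Matrix (Fin d) (Fin d) ℂ)
    (h : (Jmat d - (1 : Matrix (Fin d) (Fin d) ℂ) ⊗ₖ X).PosSemidef) (i : Fin d) :
    (X i i).re ≤ 0 := by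
  have h2 := h.diag_nonneg (i := ((i,i) : Fin d × Fin d))
  have : (0:ℂ) ≤ (Jmat d - (1 : Matrix (Fin d) (Fin d) ℂ) ⊗ₖ X) (i,i) (i,i) := by
    exact h2
  rw [Matrix.sub_apply, Jmat_eq] at this
  simp only [Matrix.diagonal_apply_eq, if_pos rfl, kroneckerMap_apply, Matrix.one_apply_eq,
    one_mul, zero_sub] at this
  rw [Complex.le_def] at this
  simpa using this.1


/-- for `d ≥ 2`, every Hermitian `X` with `I ⊗ X ≼ J` has `tr(X) ≤ 0`;
consequently the Doeblin coefficient `sup{tr X : I ⊗ X ≼ J} = 0`. -/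
theorem doeblin_coefficient_vanishes {d : ℕ} (hd : 2 ≤ d) :
    (∀ X : Matrix (Fin d) (Fin d) ℂ, X.IsHermitian →
      (Jmat d - (1 : Matrix (Fin d) (Fin d) ℂ) ⊗ₖ X).PosSemidef →
      X.trace.re ≤ 0) ∧
    sSup {r : ℝ | ∃ X : Matrix (Fin d) (Fin d) ℂ, X.IsHermitian ∧
      (Jmat d - (1 : Matrix (Fin d) (Fin d) ℂ) ⊗ₖ X).PosSemidef ∧
      r = X.trace.re} = 0 := by

  have key : ∀ X : Matrix (Fin d) (Fin d) ℂ,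
      (Jmat d - (1 : Matrix (Fin d) (Fin d) ℂ) ⊗ₖ X).PosSemidef → X.trace.re ≤ 0 := by
    intro X hP
    have : X.trace.re = ∑ i, (X i i).re := by
      simp [Matrix.trace, Matrix.diag, Complex.re_sum]
    rw [this]
    exact Finset.sum_nonpos fun i _ => diag_le X hP i
  have hmem : (0:ℝ) ∈ {r : ℝ | ∃ X : Matrix (Fin d) (Fin d) ℂ, X.IsHermitian ∧
      (Jmat d - (1 : Matrix (Fin d) (Fin d) ℂ) ⊗ₖ X).PosSemidef ∧ r = X.trace.re} := by
    refine ⟨0, Matrix.isHermitian_zero, ?_, by simp⟩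
    simpa using Jmat_posSemidef hd
  refine ⟨fun X _ hP => key X hP, le_antisymm ?_ ?_⟩
  · exact Real.sSup_le (by rintro r ⟨X, -, hP, rfl⟩; exact key X hP) le_rfl
  · exact le_csSup ⟨0, by rintro r ⟨X, -, hP, rfl⟩; exact key X hP⟩ hmem
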